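/- Given a feasible MSPEC solution (p_v) with removed edge set C, the modified assignment where for each edge (u,v) ∈ C the higher-powered endpoint v is raised to max{w(x,v) : (x,v) ∈ C selects v} and all unselected vertices are set to power 0, is still feasible (removes all edges of C), has each power equal to the weight of an incident edge or 0, and has total power at most 2·Σ_v p_v. -/

import Mathlib

open Finset

variable {α : Type*}

/-- The graph of surviving edges: an edge of `G` survives the power assignment `p`
iff `p u + p v < w (u,v)`; edges with `p u + p v ≥ w` are removed. -/
def cutGraph (G : SimpleGraph α) (w : Sym2 α → ℝ) (p : α → ℝ) : SimpleGraph α where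
  Adj u v := G.Adj u v ∧ p u + p v < w s(u, v)
  symm := by
    refine ⟨?_⟩
    intro u v h
    refine ⟨h.1.symm, ?_⟩
    rw [Sym2.eq_swap]
    linarith [h.2]
  loopless := ⟨fun u h => G.irrefl h.1⟩

/-- MSPEC feasibility: `p s = p t = 0`, powers nonnegative, and removing the
edges `(u,v)` with `p u + p v ≥ w (u,v)` disconnects `s` from `t`. -/
def Feasible (G : SimpleGraph α) (w : Sym2 α → ℝ) (s t : α) (p : α → ℝ) : Prop :=
  p s = 0 ∧ p t = 0 ∧ (∀ v, 0 ≤ p v) ∧ ¬ (cutGraph G w p).Reachable s t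

/-- The uniform (bottleneck) power assignment: power `q` on every vertex of `V`,
and `0` on `s` and `t`. -/
def uniformP [DecidableEq α] (s t : α) (q : ℝ) : α → ℝ :=
  fun v => if v = s ∨ v = t then 0 else q

/-- Deleting a vertex set `K` from a graph (all edges incident to `K` disappear). -/
def delV (H : SimpleGraph α) (K : Set α) : SimpleGraph α where
  Adj u v := H.Adj u v ∧ u ∉ K ∧ v ∉ K
  symm := ⟨fun u v h => ⟨h.1.symm, h.2.2, h.2.1⟩⟩
  loopless := ⟨fun u h => H.irrefl h.1⟩

/-- `K` is an `s`-`t` vertex cut of `H`. -/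
def IsCut (H : SimpleGraph α) (s t : α) (K : Set α) : Prop :=
  s ∉ K ∧ t ∉ K ∧ ¬ (delV H K).Reachable s t

/-- The power represented by a copy-vertex of the discretized graph:
copy `(v, i)` represents power `i * al` (and copies of `s`, `t` have power `0`). -/
def copyPow [DecidableEq α] (s t : α) (al : ℝ) (a : α × ℕ) : ℝ :=
  if a.1 = s ∨ a.1 = t then 0 else a.2 * al

/-- Validity of a copy-vertex: each `v ∈ V` has copies `v(0), …, v(c-1)`,
while `s` and `t` are represented by their `0`-th copy only. -/
def copyValid [DecidableEq α] (s t : α) (c : ℕ) (a : α × ℕ) : Prop :=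
  if a.1 = s ∨ a.1 = t then a.2 = 0 else a.2 < c

/-- The discretized graph `G'`: vertices are copies `v(i)`; there is an edge
`(u(i), v(j))` iff `(u,v)` is an edge of `G` and `iα + jα < w (u,v)`
(copies of `s`, `t` count with power `0`). -/
def discGraph [DecidableEq α] (G : SimpleGraph α) (w : Sym2 α → ℝ) (s t : α) (al : ℝ)
    (c : ℕ) : SimpleGraph (α × ℕ) where
  Adj a b := copyValid s t c a ∧ copyValid s t c b ∧ G.Adj a.1 b.1 ∧
      copyPow s t al a + copyPow s t al b < w s(a.1, b.1)
  symm := by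
    refine ⟨?_⟩
    intro a b h
    refine ⟨h.2.1, h.1, h.2.2.1.symm, ?_⟩
    rw [Sym2.eq_swap]
    linarith [h.2.2.2]
  loopless := ⟨fun a h => G.irrefl h.2.2.1⟩

/-- A set of vertices of the discretized graph consisting only of valid copies of
vertices of `V` (i.e. copy-vertices, excluding `s` and `t`). -/
def AllowedCut (s t : α) (c : ℕ) (K : Set (α × ℕ)) : Prop :=
  ∀ a ∈ K, a.1 ≠ s ∧ a.1 ≠ t ∧ a.2 < c

/-- from a feasible MSPEC assignment `p` with removed edge set `C`, one
obtains an assignment `q` in which every power is `0` or the weight of an incident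
edge, which removes every edge of `C` (hence is feasible), and whose total power is
at most `2 Σ_v p_v`. -/
theorem round_to_discrete [Fintype α]
    (G : SimpleGraph α) (w : Sym2 α → ℝ) (s t : α) (hw : ∀ e, 0 ≤ w e)
    (p : α → ℝ) (hp : Feasible G w s t p) :
    ∃ q : α → ℝ, Feasible G w s t q ∧
      (∀ v, q v = 0 ∨ ∃ u, G.Adj v u ∧ q v = w s(v, u)) ∧
      (∀ u v, G.Adj u v → w s(u, v) ≤ p u + p v → w s(u, v) ≤ q u + q v) ∧
      (∑ v, q v) ≤ 2 * ∑ v, p v := by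
  classical
  obtain ⟨hps, hpt, hp0, hpr⟩ := hp
  set S : α → Finset α := fun v =>
    Finset.univ.filter (fun u => G.Adj v u ∧ w s(v,u) ≤ p u + p v ∧ p u ≤ p v) with hS
  have hSmem : ∀ v u, u ∈ S v ↔ G.Adj v u ∧ w s(v,u) ≤ p u + p v ∧ p u ≤ p v := by
    intro v u
    simp [hS]
  set q : α → ℝ := fun v =>
    (insert (0:ℝ) ((S v).image (fun u => w s(v,u)))).max' (Finset.insert_nonempty _ _) with hq
  have hq0 : ∀ v, 0 ≤ q v := fun v =>
    Finset.le_max' _ 0 (Finset.mem_insert_self _ _)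
  have hqw : ∀ v u, u ∈ S v → w s(v,u) ≤ q v := by
    intro v u hu
    show w s(v,u) ≤ (insert (0:ℝ) ((S v).image (fun u => w s(v,u)))).max' (Finset.insert_nonempty _ _)
    have hm : w s(v,u) ∈ insert (0:ℝ) ((S v).image (fun u => w s(v,u))) :=
      Finset.mem_insert_of_mem (Finset.mem_image_of_mem _ hu)
    exact Finset.le_max' _ _ hm
  have hqub : ∀ v (b : ℝ), 0 ≤ b → (∀ u ∈ S v, w s(v,u) ≤ b) → q v ≤ b := by
    intro v b hb hub
    apply Finset.max'_le
    intro y hy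
    rcases Finset.mem_insert.1 hy with h | h
    · simpa [h] using hb
    · obtain ⟨u, hu, rfl⟩ := Finset.mem_image.1 h
      exact hub u hu
  have hqcases : ∀ v, q v = 0 ∨ ∃ u, u ∈ S v ∧ q v = w s(v,u) := by
    intro v
    have := Finset.max'_mem (insert (0:ℝ) ((S v).image (fun u => w s(v,u))))
      (Finset.insert_nonempty _ _)
    rcases Finset.mem_insert.1 this with h | h
    · exact Or.inl h
    · obtain ⟨u, hu, he⟩ := Finset.mem_image.1 h
      exact Or.inr ⟨u, hu, he.symm⟩
  -- key edge property
  have hkey : ∀ u v, G.Adj u v → w s(u, v) ≤ p u + p v → w s(u, v) ≤ q u + q v := by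
    intro u v hadj hle
    rcases le_total (p u) (p v) with h | h
    · have hu : u ∈ S v := (hSmem v u).2 ⟨hadj.symm, by rwa [Sym2.eq_swap], h⟩
      have := hqw v u hu
      rw [Sym2.eq_swap] at this
      linarith [hq0 u]
    · have hv : v ∈ S u := (hSmem u v).2 ⟨hadj, by linarith, h⟩
      have := hqw u v hv
      linarith [hq0 v]
  have hzero : ∀ x, p x = 0 → q x = 0 := by
    intro x hx
    refine le_antisymm (hqub x 0 le_rfl ?_) (hq0 x)
    intro u hu
    obtain ⟨_, hle, hle2⟩ := (hSmem x u).1 hu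
    have : p u = 0 := le_antisymm (by rw [hx] at hle2; exact hle2) (hp0 u)
    rw [hx, this] at hle
    linarith
  refine ⟨q, ⟨hzero s hps, hzero t hpt, hq0, ?_⟩, ?_, hkey, ?_⟩
  · intro hr
    apply hpr
    refine hr.mono ?_
    intro a b hab
    refine ⟨hab.1, ?_⟩
    by_contra h
    push_neg at h
    have := hkey a b hab.1 h
    linarith [hab.2]
  · intro v
    rcases hqcases v with h | ⟨u, hu, he⟩
    · exact Or.inl h
    · exact Or.inr ⟨u, ((hSmem v u).1 hu).1, he⟩
  · rw [two_mul, ← Finset.sum_add_distrib]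
    apply Finset.sum_le_sum
    intro v _
    apply hqub v _ (by linarith [hp0 v])
    intro u hu
    obtain ⟨_, hle, hle2⟩ := (hSmem v u).1 hu
    linarith
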